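/- There exist constants c, C > 0 such that for every integer y ≥ 1, c·y^{-2} ≤ |INF(y, t_max(y))| ≤ C·y^{-2}, where t_max(y) = ⌊(y²−4)/3⌋ + 2 and INF(y,t) = −(y/t)H(y,t). -/

import Mathlib

/-- Heat kernel of the simple symmetric random walk on ℤ:
`H x t = 2^{-t} * choose t ((t+x)/2)` when `t ≥ 0`, `t ≡ x (mod 2)`, `|x| ≤ t`; else `0`. -/
noncomputable def H (x t : ℤ) : ℝ :=
  if 0 ≤ t ∧ (2 : ℤ) ∣ (t - x) ∧ |x| ≤ t then
    (2 : ℝ) ^ (-t) * (t.toNat.choose ((t + x) / 2).toNat)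
  else 0

/-- Influence of a deterministic right-step compared to a random step. -/
noncomputable def INF (y t : ℤ) : ℝ :=
  if t ≤ 0 then 0 else H (y + 1) (t - 1) - H y t

/-- `t_max y = ⌊(y² - 4)/3⌋ + 2`. -/
def tmax (y : ℤ) : ℤ := Int.fdiv (y ^ 2 - 4) 3 + 2

open Real Stirling Filter


lemma log_ratio_ge {c x : ℝ} (hc : 0 < c) (hx : 0 < x) :
    c - x ≤ c * (Real.log c - Real.log x) := by
  have h := Real.log_le_sub_one_of_pos (show 0 < x / c by positivity)
  rw [Real.log_div hx.ne' hc.ne'] at h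
  have := mul_le_mul_of_nonneg_left h hc.le
  rw [mul_sub] at this
  have hxc : c * (x / c) = x := by field_simp
  nlinarith

lemma log_ratio_le {c x : ℝ} (hc : 0 < c) (hx : 0 < x) :
    c * (Real.log c - Real.log x) ≤ c ^ 2 / x - c := by
  have h := Real.log_le_sub_one_of_pos (show 0 < c / x by positivity)
  rw [Real.log_div hc.ne' hx.ne'] at h
  have := mul_le_mul_of_nonneg_left h hc.le
  have hcx : c * (c / x) = c ^ 2 / x := by field_simp
  nlinarith

lemma entropy_ge {a b : ℝ} (ha : 0 < a) (hb : 0 < b) :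
    (a + b) * Real.log ((a + b) / 2) ≤ a * Real.log a + b * Real.log b := by
  have h1 := log_ratio_ge ha (show 0 < (a+b)/2 by positivity)
  have h2 := log_ratio_ge hb (show 0 < (a+b)/2 by positivity)
  nlinarith

lemma entropy_le {a b : ℝ} (ha : 0 < a) (hb : 0 < b) :
    a * Real.log a + b * Real.log b ≤ (a + b) * Real.log ((a + b) / 2) + (a - b) ^ 2 / (a + b) := by
  have hn : 0 < a + b := by linarith
  have h1 := log_ratio_le ha (show 0 < (a+b)/2 by positivity)
  have h2 := log_ratio_le hb (show 0 < (a+b)/2 by positivity)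
  have key : a^2/((a+b)/2) + b^2/((a+b)/2) - (a+b) = (a-b)^2/(a+b) := by
    field_simp; ring
  nlinarith

lemma rpow_center_le {a b : ℝ} (ha : 0 < a) (hb : 0 < b) :
    ((a + b) / 2) ^ (a + b) ≤ a ^ a * b ^ b := by
  rw [← Real.log_le_log_iff (by positivity) (by positivity),
    Real.log_mul (by positivity) (by positivity),
    Real.log_rpow (by positivity), Real.log_rpow ha, Real.log_rpow hb]
  exact entropy_ge ha hb

lemma rpow_center_ge {a b : ℝ} (ha : 0 < a) (hb : 0 < b) :
    a ^ a * b ^ b ≤ ((a + b) / 2) ^ (a + b) * Real.exp ((a - b) ^ 2 / (a + b)) := by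
  rw [← Real.log_le_log_iff (by positivity) (by positivity),
    Real.log_mul (by positivity) (by positivity),
    Real.log_mul (by positivity) (Real.exp_pos _).ne',
    Real.log_rpow ha, Real.log_rpow hb, Real.log_rpow (by positivity), Real.log_exp]
  exact entropy_le ha hb


noncomputable def E : ℝ := Real.exp 1 / √2
noncomputable def cLo : ℝ := √π / (E^2 * √2 * Real.exp 3)
noncomputable def cHi : ℝ := 2 * E / π
lemma E_pos : 0 < E := by unfold E; positivity
lemma cLo_pos : 0 < cLo := by unfold cLo; have := E_pos; positivity
lemma cHi_pos : 0 < cHi := by unfold cHi; have := E_pos; positivity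

lemma sqrtpi_le_stirlingSeq {n : ℕ} (hn : 1 ≤ n) : √π ≤ stirlingSeq n := by
  obtain ⟨m, rfl⟩ := Nat.exists_eq_add_of_le hn
  have := stirlingSeq'_antitone.le_of_tendsto
    (tendsto_stirlingSeq_sqrt_pi.comp (tendsto_add_atTop_nat 1)) m
  simpa [Function.comp, Nat.add_comm] using this

lemma stirlingSeq_le_E {n : ℕ} (hn : 1 ≤ n) : stirlingSeq n ≤ E := by
  obtain ⟨m, rfl⟩ := Nat.exists_eq_add_of_le hn
  have := stirlingSeq'_antitone (Nat.zero_le m)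
  simpa [E, Function.comp, Nat.add_comm, stirlingSeq_one] using this

lemma fact_ge' {n : ℕ} (hn : 1 ≤ n) :
    √π * (√(2*n) * (n:ℝ)^n) ≤ n.factorial * Real.exp 1 ^ n := by
  have hn0 : (0:ℝ) < n := by exact_mod_cast hn
  have hd : 0 < √(2*n:ℝ) * ((n:ℝ)/Real.exp 1)^n := by positivity
  have h := sqrtpi_le_stirlingSeq hn
  rw [stirlingSeq, le_div_iff₀ hd] at h
  have h2 : √π * (√(2*(n:ℝ)) * ((n:ℝ)/Real.exp 1)^n) * Real.exp 1 ^ n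
      = √π * (√(2*(n:ℝ)) * (n:ℝ)^n) := by
    rw [div_pow]; field_simp
  calc √π * (√(2*(n:ℝ)) * (n:ℝ)^n)
      = √π * (√(2*(n:ℝ)) * ((n:ℝ)/Real.exp 1)^n) * Real.exp 1 ^ n := h2.symm
    _ ≤ n.factorial * Real.exp 1 ^ n :=
        mul_le_mul_of_nonneg_right h (by positivity)

lemma fact_le' {n : ℕ} (hn : 1 ≤ n) :
    (n.factorial : ℝ) * Real.exp 1 ^ n ≤ E * (√(2*n) * (n:ℝ)^n) := by
  have hn0 : (0:ℝ) < n := by exact_mod_cast hn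
  have hd : 0 < √(2*n:ℝ) * ((n:ℝ)/Real.exp 1)^n := by positivity
  have h := stirlingSeq_le_E hn
  rw [stirlingSeq, div_le_iff₀ hd] at h
  have h2 : E * (√(2*(n:ℝ)) * ((n:ℝ)/Real.exp 1)^n) * Real.exp 1 ^ n
      = E * (√(2*(n:ℝ)) * (n:ℝ)^n) := by
    rw [div_pow]; field_simp
  calc (n.factorial : ℝ) * Real.exp 1 ^ n
      ≤ E * (√(2*(n:ℝ)) * ((n:ℝ)/Real.exp 1)^n) * Real.exp 1 ^ n :=
        mul_le_mul_of_nonneg_right h (by positivity)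
    _ = E * (√(2*(n:ℝ)) * (n:ℝ)^n) := h2

set_option maxHeartbeats 1600000 in
lemma choose_bounds (K M : ℕ) (hK : 1 ≤ K) (hM : 1 ≤ M)
    (h1 : K + M ≤ 2*K) (h2 : K + M ≤ 4*M)
    (h3 : ((K:ℝ) - M)^2 ≤ 3*((K:ℝ)+M)) :
    cLo / √((K:ℝ)+M) ≤ (((K+M).choose K : ℕ) : ℝ) / 2^(K+M) ∧
    (((K+M).choose K : ℕ) : ℝ) / 2^(K+M) ≤ cHi / √((K:ℝ)+M) := by
  obtain ⟨T, hT⟩ : ∃ T, T = K + M := ⟨_, rfl⟩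
  obtain ⟨n, hndef⟩ : ∃ n : ℝ, n = (K:ℝ) + M := ⟨_, rfl⟩
  rw [← hT, ← hndef]
  rw [← hndef] at h3
  have hKpos : (0:ℝ) < K := by exact_mod_cast hK
  have hMpos : (0:ℝ) < M := by exact_mod_cast hM
  have hnpos : 0 < n := by rw [hndef]; positivity
  have hTcast : ((T:ℕ):ℝ) = n := by rw [hT, hndef]; push_cast; ring
  have hT1 : 1 ≤ T := by omega
  have heT : Real.exp 1 ^ T = Real.exp 1 ^ K * Real.exp 1 ^ M := by rw [hT, pow_add]
  have hch0 : (0:ℝ) ≤ ((T.choose K : ℕ) : ℝ) := by positivity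
  have hfac : ((T.choose K : ℕ) : ℝ) * ((K.factorial:ℝ) * (M.factorial:ℝ))
      = (T.factorial : ℝ) := by
    have h := Nat.choose_mul_factorial_mul_factorial (show K ≤ T by omega)
    have hTK : T - K = M := by omega
    rw [hTK] at h
    push_cast [← h]; ring
  -- entropy bounds in pow form
  have ent1 : (n/2)^T ≤ (K:ℝ)^K * (M:ℝ)^M := by
    have h := rpow_center_le hKpos hMpos
    rw [← Real.rpow_natCast (n/2) T, ← Real.rpow_natCast (K:ℝ) K, ← Real.rpow_natCast (M:ℝ) M,
      hTcast, hndef]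
    exact h
  have ent2 : (K:ℝ)^K * (M:ℝ)^M ≤ (n/2)^T * Real.exp 3 := by
    have h := rpow_center_ge hKpos hMpos
    have hexp : Real.exp (((K:ℝ) - M)^2 / ((K:ℝ)+M)) ≤ Real.exp 3 := by
      rw [Real.exp_le_exp, ← hndef, div_le_iff₀ hnpos]
      nlinarith [h3]
    rw [← Real.rpow_natCast (n/2) T, ← Real.rpow_natCast (K:ℝ) K, ← Real.rpow_natCast (M:ℝ) M,
      hTcast]
    calc (K:ℝ) ^ ((K:ℕ):ℝ) * (M:ℝ) ^ ((M:ℕ):ℝ)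
        ≤ (((K:ℝ)+M)/2) ^ ((K:ℝ)+(M:ℝ)) * Real.exp (((K:ℝ) - M)^2 / ((K:ℝ)+M)) := h
      _ = (((K:ℝ)+M)/2) ^ ((K:ℝ)+(M:ℝ)) * Real.exp (((K:ℝ) - M)^2 / ((K:ℝ)+M)) := rfl
      _ ≤ (((K:ℝ)+M)/2) ^ ((K:ℝ)+(M:ℝ)) * Real.exp 3 :=
          mul_le_mul_of_nonneg_left hexp (Real.rpow_nonneg (by positivity) _)
      _ = (n/2) ^ (n) * Real.exp 3 := by rw [hndef]
  have h2T : (n/2)^T * 2^T = n^T := by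
    rw [← mul_pow, div_mul_cancel₀]; norm_num
  -- factorial product bounds
  have hKM2 : ((K.factorial:ℝ) * M.factorial) * Real.exp 1 ^ T
      ≤ E^2 * (√(2*K) * √(2*M) * ((K:ℝ)^K * (M:ℝ)^M)) := by
    calc ((K.factorial:ℝ) * M.factorial) * Real.exp 1 ^ T
        = ((K.factorial:ℝ) * Real.exp 1 ^ K) * ((M.factorial:ℝ) * Real.exp 1 ^ M) := by
          rw [heT]; ring
      _ ≤ (E * (√(2*K) * (K:ℝ)^K)) * (E * (√(2*M) * (M:ℝ)^M)) :=
          mul_le_mul (fact_le' hK) (fact_le' hM) (by positivity) (by have := E_pos; positivity)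
      _ = E^2 * (√(2*K) * √(2*M) * ((K:ℝ)^K * (M:ℝ)^M)) := by ring
  have hππ : √π * √π = π := Real.mul_self_sqrt pi_nonneg
  have hKM1 : π * (√(2*K) * √(2*M) * ((K:ℝ)^K * (M:ℝ)^M))
      ≤ ((K.factorial:ℝ) * M.factorial) * Real.exp 1 ^ T := by
    calc π * (√(2*K) * √(2*M) * ((K:ℝ)^K * (M:ℝ)^M))
        = (√π * (√(2*K) * (K:ℝ)^K)) * (√π * (√(2*M) * (M:ℝ)^M)) := by
          linear_combination (-(√(2*(K:ℝ))*√(2*(M:ℝ))*((K:ℝ)^K*(M:ℝ)^M))) * hππ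
      _ ≤ ((K.factorial:ℝ) * Real.exp 1 ^ K) * ((M.factorial:ℝ) * Real.exp 1 ^ M) :=
          mul_le_mul (fact_ge' hK) (fact_ge' hM) (by positivity) (by positivity)
      _ = ((K.factorial:ℝ) * M.factorial) * Real.exp 1 ^ T := by rw [heT]; ring
  -- sqrt product bounds
  have s2 : √(2:ℝ) * √2 = 2 := Real.mul_self_sqrt (by norm_num)
  have sn : √n * √n = n := Real.mul_self_sqrt hnpos.le
  have sK_hi : √(2*(K:ℝ)) ≤ √(2*n) := Real.sqrt_le_sqrt (by rw [hndef]; nlinarith)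
  have sM_hi : √(2*(M:ℝ)) ≤ √(2*n) := Real.sqrt_le_sqrt (by rw [hndef]; nlinarith)
  have s2n : √(2*n) * √(2*n) = 2*n := Real.mul_self_sqrt (by positivity)
  have sProd_hi : √(2*(K:ℝ)) * √(2*(M:ℝ)) ≤ 2*n := by
    calc √(2*(K:ℝ)) * √(2*(M:ℝ)) ≤ √(2*n) * √(2*n) :=
        mul_le_mul sK_hi sM_hi (by positivity) (by positivity)
      _ = 2*n := s2n
  have sK_lo : √n ≤ √(2*(K:ℝ)) := by
    apply Real.sqrt_le_sqrt
    have : (K:ℝ) + M ≤ 2*K := by exact_mod_cast h1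
    rw [hndef]; linarith
  have sM_lo : √(n/2) ≤ √(2*(M:ℝ)) := by
    apply Real.sqrt_le_sqrt
    have : (K:ℝ) + M ≤ 4*M := by exact_mod_cast h2
    rw [hndef]; linarith
  have sProd_lo : √n * √(n/2) ≤ √(2*(K:ℝ)) * √(2*(M:ℝ)) :=
    mul_le_mul sK_lo sM_lo (by positivity) (by positivity)
  have sn2 : √(n/2) * √2 = √n := by
    rw [← Real.sqrt_mul (by positivity), div_mul_cancel₀]; norm_num
  have heq1 : √2 * √n * √(2*n) = 2*n := by
    rw [Real.sqrt_mul (by norm_num : (0:ℝ) ≤ 2) n]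
    linear_combination (√n * √n) * s2 + 2 * sn
  have heq1' : √n * √(2*n) = √2 * n := by
    rw [Real.sqrt_mul (by norm_num : (0:ℝ) ≤ 2) n]
    linear_combination √2 * sn
  have heq2 : √2 * n = 2*(√n*√(n/2)) := by
    rw [Real.sqrt_div hnpos.le]
    have h2ne : √(2:ℝ) ≠ 0 := by positivity
    field_simp
    linear_combination n * s2 - 2 * sn
  have hDpos : (0:ℝ) < E^2 * √2 * Real.exp 3 := by have := E_pos; positivity
  have hZpos : (0:ℝ) < ((K.factorial:ℝ) * M.factorial) * Real.exp 1 ^ T := by positivity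
  constructor
  · -- lower bound
    rw [div_le_div_iff₀ (by positivity) (by positivity)]
    rw [cLo, div_mul_eq_mul_div, div_le_iff₀ hDpos]
    -- √π * 2^T ≤ choose * √n * D
    refine le_of_mul_le_mul_right ?_ hZpos
    calc √π * 2^T * (((K.factorial:ℝ) * M.factorial) * Real.exp 1 ^ T)
        ≤ √π * 2^T * (E^2 * (√(2*K) * √(2*M) * ((K:ℝ)^K * (M:ℝ)^M))) := by
          apply mul_le_mul_of_nonneg_left hKM2 (by positivity)
      _ ≤ √π * 2^T * (E^2 * (√(2*K) * √(2*M) * ((n/2)^T * Real.exp 3))) := by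
          apply mul_le_mul_of_nonneg_left _ (by positivity)
          apply mul_le_mul_of_nonneg_left _ (by positivity)
          exact mul_le_mul_of_nonneg_left ent2 (by positivity)
      _ = √π * (E^2 * Real.exp 3) * (√(2*K) * √(2*M)) * ((n/2)^T * 2^T) := by ring
      _ = √π * (E^2 * Real.exp 3) * (√(2*K) * √(2*M)) * n^T := by rw [h2T]
      _ ≤ √π * (E^2 * Real.exp 3) * (2*n) * n^T := by
          apply mul_le_mul_of_nonneg_right _ (by positivity)
          apply mul_le_mul_of_nonneg_left sProd_hi (by positivity)
      _ = √n * (E^2 * √2 * Real.exp 3) * (√π * (√(2*n) * n^T)) := by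
          rw [show √n * (E^2 * √2 * Real.exp 3) * (√π * (√(2*n) * n^T))
              = √π * (E^2 * Real.exp 3) * (√2 * √n * √(2*n)) * n^T from by ring, heq1]
      _ ≤ √n * (E^2 * √2 * Real.exp 3) * ((T.factorial:ℝ) * Real.exp 1 ^ T) := by
          apply mul_le_mul_of_nonneg_left _ (by positivity)
          have := fact_ge' hT1
          rw [hTcast] at this
          exact this
      _ = ((T.choose K : ℕ):ℝ) * √n * (E^2 * √2 * Real.exp 3) *
            (((K.factorial:ℝ) * M.factorial) * Real.exp 1 ^ T) := by
          rw [show ((T.choose K : ℕ):ℝ) * √n * (E^2 * √2 * Real.exp 3) *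
            (((K.factorial:ℝ) * M.factorial) * Real.exp 1 ^ T)
            = √n * (E^2 * √2 * Real.exp 3) *
              ((((T.choose K : ℕ):ℝ) * ((K.factorial:ℝ) * M.factorial)) * Real.exp 1 ^ T) from by
                ring, hfac]
  · -- upper bound
    rw [div_le_div_iff₀ (by positivity) (by positivity)]
    rw [cHi, div_mul_eq_mul_div, le_div_iff₀ Real.pi_pos]
    -- ↑choose * √n ≤ 2*E*2^T/π → after div_le_iff: ↑choose*√n*π ≤ 2*E*2^T
    refine le_of_mul_le_mul_right ?_ hZpos
    calc ((T.choose K : ℕ):ℝ) * √n * π * (((K.factorial:ℝ) * M.factorial) * Real.exp 1 ^ T)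
        = √n * π * ((((T.choose K : ℕ):ℝ) * ((K.factorial:ℝ) * M.factorial)) * Real.exp 1 ^ T) := by
          ring
      _ = √n * π * ((T.factorial:ℝ) * Real.exp 1 ^ T) := by rw [hfac]
      _ ≤ √n * π * (E * (√(2*n) * n^T)) := by
          apply mul_le_mul_of_nonneg_left _ (by positivity)
          have := fact_le' hT1
          rw [hTcast] at this
          exact this
      _ = E * π * (√n * √(2*n)) * n^T := by ring
      _ = E * π * (√2 * n) * n^T := by rw [heq1']
      _ = E * π * (2*(√n*√(n/2))) * n^T := by rw [heq2]
      _ = 2*E*2^T * (π * (√n*√(n/2) * (n/2)^T)) := by rw [← h2T]; ring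
      _ ≤ 2*E*2^T * (π * (√(2*(K:ℝ))*√(2*(M:ℝ)) * (n/2)^T)) := by
          apply mul_le_mul_of_nonneg_left _ (by have := E_pos; positivity)
          apply mul_le_mul_of_nonneg_left _ Real.pi_pos.le
          exact mul_le_mul_of_nonneg_right sProd_lo (by positivity)
      _ ≤ 2*E*2^T * (π * (√(2*(K:ℝ))*√(2*(M:ℝ)) * ((K:ℝ)^K * (M:ℝ)^M))) := by
          apply mul_le_mul_of_nonneg_left _ (by have := E_pos; positivity)
          apply mul_le_mul_of_nonneg_left _ Real.pi_pos.le
          exact mul_le_mul_of_nonneg_left ent1 (by positivity)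
      _ ≤ 2*E*2^T * (((K.factorial:ℝ) * M.factorial) * Real.exp 1 ^ T) := by
          apply mul_le_mul_of_nonneg_left hKM1 (by have := E_pos; positivity)

lemma tmax_facts (y : ℤ) :
    y^2 ≤ 3 * tmax y ∧ 3 * tmax y ≤ y^2 + 2 ∧ 2 ∣ tmax y - y := by
  unfold tmax
  rw [Int.fdiv_eq_ediv_of_nonneg _ (by norm_num)]
  obtain ⟨q, r, hr0, hr6, rfl⟩ : ∃ q r, 0 ≤ r ∧ r < 6 ∧ y = 6*q+r :=
    ⟨y/6, y%6, Int.emod_nonneg y (by norm_num), Int.emod_lt_of_pos y (by norm_num),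
      by omega⟩
  have hs : (6*q+r)^2 = 36*(q*q)+12*(q*r)+r*r := by ring
  rw [hs]
  obtain ⟨a, ha⟩ : ∃ a, q*q = a := ⟨_, rfl⟩
  obtain ⟨b, hb⟩ : ∃ b, q*r = b := ⟨_, rfl⟩
  rw [ha, hb]
  interval_cases r <;> omega


set_option maxHeartbeats 1000000 in
theorem inf_tmax_order :
    ∃ c C : ℝ, 0 < c ∧ 0 < C ∧ ∀ y : ℤ, 1 ≤ y →
      c / (y : ℝ) ^ 2 ≤ |INF y (tmax y)| ∧ |INF y (tmax y)| ≤ C / (y : ℝ) ^ 2 := by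
  refine ⟨min (2*cLo) (1/2), max (3*(√3*cHi)) 2,
    lt_min (by have := cLo_pos; positivity) one_half_pos,
    lt_of_lt_of_le two_pos (le_max_right _ _), ?_⟩
  intro y hy
  have hyR : (1:ℝ) ≤ (y:ℝ) := by exact_mod_cast hy
  have hy2pos : (0:ℝ) < (y:ℝ)^2 := by positivity
  rcases lt_or_ge y 6 with hsmall | hbig
  · -- small cases 1 ≤ y ≤ 5
    have hval : (1/2 : ℝ) ≤ (y:ℝ)^2 * |INF y (tmax y)| ∧ (y:ℝ)^2 * |INF y (tmax y)| ≤ 2 := by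
      interval_cases y
      · have h : tmax 1 = 1 := by decide
        rw [h]; norm_num [INF, H, Int.toNat_natCast, Nat.choose, abs_of_pos]
      · have h : tmax 2 = 2 := by decide
        rw [h]; norm_num [INF, H, Int.toNat_natCast, Nat.choose, abs_of_pos]
      · have h : tmax 3 = 3 := by decide
        rw [h]; norm_num [INF, H, Int.toNat_natCast, Nat.choose, abs_of_pos]
      · have h : tmax 4 = 6 := by decide
        rw [h]; norm_num [INF, H, Int.toNat_natCast, Nat.choose, abs_of_pos,
          show Int.toNat 6 = 6 from rfl, show Int.toNat 5 = 5 from rfl]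
      · have h : tmax 5 = 9 := by decide
        rw [h]; norm_num [INF, H, Int.toNat_natCast, Nat.choose, abs_of_pos,
          show Int.toNat 9 = 9 from rfl, show Int.toNat 8 = 8 from rfl,
          show Int.toNat 7 = 7 from rfl]
    constructor
    · rw [div_le_iff₀ hy2pos]
      calc min (2*cLo) (1/2) ≤ 1/2 := min_le_right _ _
        _ ≤ (y:ℝ)^2 * |INF y (tmax y)| := hval.1
        _ = |INF y (tmax y)| * (y:ℝ)^2 := by ring
    · rw [le_div_iff₀ hy2pos]
      calc |INF y (tmax y)| * (y:ℝ)^2 = (y:ℝ)^2 * |INF y (tmax y)| := by ring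
        _ ≤ 2 := hval.2
        _ ≤ max (3*(√3*cHi)) 2 := le_max_right _ _
  · -- main case y ≥ 6
    obtain ⟨hb1, hb2, hb3⟩ := tmax_facts y
    obtain ⟨t, ht⟩ : ∃ t, t = tmax y := ⟨_, rfl⟩
    rw [← ht] at hb1 hb2 hb3 ⊢
    have hyy : 6*y ≤ y^2 := by nlinarith
    have hy36 : 36 ≤ y^2 := by nlinarith
    -- integer facts
    have htpos : 0 < t := by omega
    have h2y : 2*y ≤ t := by omega
    have hy2t : y + 2 ≤ t := by omega
    have hty2 : 2*t ≤ y^2 := by omega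
    obtain ⟨k, hk⟩ : ∃ k, t + y = 2*k := ⟨(t+y)/2, by omega⟩
    obtain ⟨m, hm⟩ : ∃ m, t - y = 2*m := ⟨(t-y)/2, by omega⟩
    have hkm : k + m = t := by omega
    have hkm' : k - m = y := by omega
    have hk1 : 1 ≤ k := by omega
    have hm1 : 1 ≤ m := by omega
    -- nat versions
    obtain ⟨K, hK⟩ : ∃ K : ℕ, (K:ℤ) = k := ⟨k.toNat, Int.toNat_of_nonneg (by omega)⟩
    obtain ⟨M, hM⟩ : ∃ M : ℕ, (M:ℤ) = m := ⟨m.toNat, Int.toNat_of_nonneg (by omega)⟩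
    have hTnat : t.toNat = K + M := by omega
    have hT1nat : (t-1).toNat = (K + M) - 1 := by omega
    have hidx1 : ((t + y)/2).toNat = K := by omega
    have hidx2 : ((t - 1 + (y+1))/2).toNat = K := by omega
    -- evaluate INF
    have hH1 : H y t = (2:ℝ)^(-t) * ((K+M).choose K : ℝ) := by
      rw [H, if_pos ⟨by omega, hb3, by rw [abs_of_pos (by omega : (0:ℤ) < y)]; omega⟩,
        hidx1, hTnat]
    have hH2 : H (y+1) (t-1) = (2:ℝ)^(-(t-1)) * ((K+M-1).choose K : ℝ) := by
      rw [H, if_pos ⟨by omega, ⟨m-1, by omega⟩, by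
        rw [abs_of_pos (by omega : (0:ℤ) < y+1)]; omega⟩, hidx2, hT1nat]
    have hINF : INF y t = H (y+1) (t-1) - H y t := by rw [INF, if_neg (by omega)]
    -- choose identity
    have hchid : ((K+M-1).choose K : ℝ) * ((K:ℝ)+M) = ((K+M).choose K : ℝ) * M := by
      have h := Nat.choose_mul_succ_eq (K+M-1) K
      have e1 : K+M-1+1 = K+M := by omega
      rw [e1] at h
      have e2 : K+M-K = M := by omega
      rw [e2] at h
      exact_mod_cast h
    -- real casts
    have hy0R : (0:ℝ) ≤ (y:ℝ) := by linarith
    have hsumR : ((K:ℝ)+(M:ℝ)) = (t:ℝ) := by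
      have h : ((K:ℤ) + (M:ℤ) : ℤ) = t := by omega
      exact_mod_cast h
    have hdiffR : ((K:ℝ)-(M:ℝ)) = (y:ℝ) := by
      have h : ((K:ℤ) - (M:ℤ) : ℤ) = y := by omega
      exact_mod_cast h
    have htposR : (0:ℝ) < ((K:ℝ)+M) := by
      rw [hsumR]; exact_mod_cast htpos
    -- zpow conversions
    have hzp : (2:ℝ)^(-t) = ((2:ℝ)^(K+M))⁻¹ := by
      rw [zpow_neg]
      congr 1
      rw [← zpow_natCast]
      congr 1
      omega
    have hzp2 : (2:ℝ)^(-(t-1)) = 2*((2:ℝ)^(K+M))⁻¹ := by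
      rw [show -(t-1) = -t + 1 by ring, zpow_add₀ (by norm_num : (2:ℝ) ≠ 0), hzp, zpow_one]
      ring
    -- key identity
    have key : (2*((K+M-1).choose K : ℝ) - ((K+M).choose K : ℝ)) * ((K:ℝ)+M)
        = -(y:ℝ) * ((K+M).choose K : ℝ) := by
      linear_combination 2*hchid - ((K+M).choose K : ℝ)*hdiffR
    have h2KM : (0:ℝ) < (2:ℝ)^(K+M) := by positivity
    have hVval : INF y t
        = -((y:ℝ)/((K:ℝ)+M)) * (((K+M).choose K : ℝ) * ((2:ℝ)^(K+M))⁻¹) := by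
      rw [hINF, hH1, hH2, hzp2, hzp]
      have hKM0 : ((K:ℝ)+M) ≠ 0 := htposR.ne'
      have h2ne : ((2:ℝ)^(K+M)) ≠ 0 := h2KM.ne'
      field_simp
      linear_combination key
    have habs : |INF y t|
        = ((y:ℝ)/((K:ℝ)+M)) * (((K+M).choose K : ℝ) * ((2:ℝ)^(K+M))⁻¹) := by
      rw [hVval, neg_mul, abs_neg, abs_of_nonneg]
      exact mul_nonneg (div_nonneg hy0R htposR.le) (by positivity)
    -- choose bounds
    obtain ⟨hlo, hhi⟩ := choose_bounds K M (by omega) (by omega) (by omega) (by omega)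
      (by rw [hdiffR, hsumR]; exact_mod_cast hb1)
    -- sqrt facts
    have hsq_pos : (0:ℝ) < √((K:ℝ)+M) := Real.sqrt_pos.mpr htposR
    have hsqt_le : √((K:ℝ)+M) ≤ (y:ℝ) := by
      rw [hsumR, show (y:ℝ) = √((y:ℝ)^2) from (Real.sqrt_sq hy0R).symm]
      apply Real.sqrt_le_sqrt
      exact_mod_cast (by omega : t ≤ y^2)
    have hsqt_ge : (y:ℝ) ≤ √3 * √((K:ℝ)+M) := by
      rw [hsumR, ← Real.sqrt_mul (by norm_num : (0:ℝ) ≤ 3),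
        show (y:ℝ) = √((y:ℝ)^2) from (Real.sqrt_sq hy0R).symm]
      apply Real.sqrt_le_sqrt
      exact_mod_cast hb1
    have hyt_lo : 2/(y:ℝ) ≤ (y:ℝ)/((K:ℝ)+M) := by
      rw [hsumR, div_le_div_iff₀ (by linarith) (by exact_mod_cast htpos)]
      have h2tR : 2*(t:ℝ) ≤ (y:ℝ)^2 := by exact_mod_cast hty2
      nlinarith
    have hyt_hi : (y:ℝ)/((K:ℝ)+M) ≤ 3/(y:ℝ) := by
      rw [hsumR, div_le_div_iff₀ (by exact_mod_cast htpos) (by linarith)]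
      have hb1R : (y:ℝ)^2 ≤ 3*(t:ℝ) := by exact_mod_cast hb1
      nlinarith
    have hyR6 : (6:ℝ) ≤ (y:ℝ) := by exact_mod_cast hbig
    constructor
    · calc min (2*cLo) (1/2)/(y:ℝ)^2 ≤ 2*cLo/(y:ℝ)^2 := by
            gcongr
            exact min_le_left _ _
        _ = (2/(y:ℝ)) * (cLo/(y:ℝ)) := by ring
        _ ≤ ((y:ℝ)/((K:ℝ)+M)) * (cLo/√((K:ℝ)+M)) := by
            apply mul_le_mul hyt_lo
              (div_le_div_of_nonneg_left cLo_pos.le hsq_pos hsqt_le)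
              (by have := cLo_pos; positivity)
              (div_nonneg hy0R htposR.le)
        _ ≤ ((y:ℝ)/((K:ℝ)+M)) * (((K+M).choose K:ℝ)/2^(K+M)) :=
            mul_le_mul_of_nonneg_left hlo (div_nonneg hy0R htposR.le)
        _ = |INF y t| := by rw [habs]; ring
    · calc |INF y t|
          = ((y:ℝ)/((K:ℝ)+M)) * (((K+M).choose K:ℝ)/2^(K+M)) := by
            rw [habs]; ring
        _ ≤ ((y:ℝ)/((K:ℝ)+M)) * (cHi/√((K:ℝ)+M)) :=
            mul_le_mul_of_nonneg_left hhi (div_nonneg hy0R htposR.le)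
        _ ≤ (3/(y:ℝ)) * (√3*cHi/(y:ℝ)) := by
            apply mul_le_mul hyt_hi ?_ (by have := cHi_pos; positivity)
              (by positivity)
            · have hyd : (y:ℝ)/√3 ≤ √((K:ℝ)+M) := by
                rw [div_le_iff₀ (by positivity : (0:ℝ) < √3)]
                calc (y:ℝ) ≤ √3*√((K:ℝ)+M) := hsqt_ge
                  _ = √((K:ℝ)+M)*√3 := by ring
              calc cHi/√((K:ℝ)+M) ≤ cHi/((y:ℝ)/√3) :=
                  div_le_div_of_nonneg_left cHi_pos.le (by positivity) hyd
                _ = √3*cHi/(y:ℝ) := by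
                  rw [div_div_eq_mul_div]; ring
        _ = 3*(√3*cHi)/(y:ℝ)^2 := by ring
        _ ≤ max (3*(√3*cHi)) 2/(y:ℝ)^2 := by
            gcongr
            exact le_max_left _ _
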